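/- arXiv:1105.2748 — 4 statements merged into one kernel-verified Lean document; each statement's English description precedes it below -/
import Mathlib

section
/- Let N > 2 and let a, c : ℝ^N → ℝ be locally Hölder continuous with some exponent α ∈ (0,1), with a(x) > 0 and c(x) > 0 for all x ∈ ℝ^N. Define φ(r) = max_{|x|=r} a(x), assume ∫₀^∞ r·φ(r) dr < ∞, and assume additionally that lim_{|x|→∞} |x|^μ · φ(|x|) exists and is finite for some μ ∈ (2, N). Then the positive solution u of −Δu + c(x)·u^{−1}·|∇u|² = a(x) on ℝ^N constructed as the locally uniform C² limit of the solutions on the balls B_k (which vanishes at infinity) satisfies u(x) = O(|x|^{2−μ}) as |x| → ∞, i.e. there exist constants C > 0 and R > 0 such that u(x) ≤ C·|x|^{2−μ} whenever |x| ≥ R. -/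
open Set Filter MeasureTheory

/-- The Laplacian of `u : ℝ^N → ℝ`: the sum of its second partial derivatives. -/
noncomputable def lap {N : ℕ} (u : EuclideanSpace ℝ (Fin N) → ℝ)
    (x : EuclideanSpace ℝ (Fin N)) : ℝ :=
  ∑ i : Fin N, fderiv ℝ (fun y => fderiv ℝ u y (EuclideanSpace.single i 1)) x
    (EuclideanSpace.single i 1)

/-- `f` is locally α-Hölder continuous on `ℝ^N`. -/
def LocHolder {N : ℕ} {F : Type*} [PseudoEMetricSpace F] (α : NNReal)
    (f : EuclideanSpace ℝ (Fin N) → F) : Prop :=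
  ∀ K : Set (EuclideanSpace ℝ (Fin N)), IsCompact K → ∃ C : NNReal, HolderOnWith C α f K

open Topology

/-- One-dimensional second derivative test: at an interior local maximum, the second
derivative is nonpositive. -/
lemma second_deriv_nonpos_of_isLocalMax {f f' : ℝ → ℝ} {s ε : ℝ} (hε : 0 < ε)
    (hd : ∀ t ∈ Set.Ioo (-ε) ε, HasDerivAt f (f' t) t)
    (hd2 : HasDerivAt f' s 0) (hmax : IsLocalMax f 0) : s ≤ 0 := by
  by_contra hs
  push_neg at hs
  have h0mem : (0:ℝ) ∈ Set.Ioo (-ε) ε := ⟨by linarith, hε⟩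
  have hf'0 : f' 0 = 0 := by
    have h0 := hmax.deriv_eq_zero
    rwa [(hd 0 h0mem).deriv] at h0
  have hslope : Tendsto (slope f' 0) (𝓝[≠] (0:ℝ)) (𝓝 s) :=
    hasDerivAt_iff_tendsto_slope.1 hd2
  have hev : ∀ᶠ t in 𝓝[>] (0:ℝ), 0 < slope f' 0 t := by
    have hmono : 𝓝[>] (0:ℝ) ≤ 𝓝[≠] (0:ℝ) :=
      nhdsWithin_mono 0 (fun x hx => ne_of_gt hx)
    exact (hslope.mono_left hmono).eventually (eventually_gt_nhds hs)
  obtain ⟨δ₀, hδ₀, hδ₀sub⟩ := mem_nhdsGT_iff_exists_Ioo_subset.1 hev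
  have hδ₀0 : 0 < δ₀ := hδ₀
  set δ : ℝ := min δ₀ ε / 2 with hδdef
  have hδpos : 0 < δ := by positivity
  have hδltδ₀ : δ < δ₀ := by
    have : min δ₀ ε ≤ δ₀ := min_le_left _ _
    simp only [hδdef]; linarith
  have hδltε : δ < ε := by
    have : min δ₀ ε ≤ ε := min_le_right _ _
    simp only [hδdef]; linarith
  have hpos : ∀ t ∈ Set.Ioo (0:ℝ) δ, 0 < f' t := by
    intro t ht
    have hts : 0 < slope f' 0 t := hδ₀sub ⟨ht.1, lt_trans ht.2 hδltδ₀⟩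
    have hslope_eq : slope f' 0 t = f' t / t := by
      simp [slope, hf'0, div_eq_inv_mul]
    rw [hslope_eq] at hts
    have := mul_pos hts ht.1
    rwa [div_mul_cancel₀ _ (ne_of_gt ht.1)] at this
  have hsub : Set.Icc (0:ℝ) δ ⊆ Set.Ioo (-ε) ε := by
    intro t ht
    exact ⟨by linarith [ht.1], lt_of_le_of_lt ht.2 hδltε⟩
  have hmono : StrictMonoOn f (Set.Icc 0 δ) := by
    apply strictMonoOn_of_deriv_pos (convex_Icc 0 δ)
    · intro t ht
      exact (hd t (hsub ht)).continuousAt.continuousWithinAt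
    · intro t ht
      rw [interior_Icc] at ht
      rw [(hd t (hsub (Set.mem_Icc_of_Ioo ht))).deriv]
      exact hpos t ht
  obtain ⟨η, hη, hηmax⟩ := Metric.eventually_nhds_iff.1 hmax
  set t0 : ℝ := min δ η / 2 with ht0def
  have ht0pos : 0 < t0 := by positivity
  have ht0δ : t0 ≤ δ := by
    have : min δ η ≤ δ := min_le_left _ _
    simp only [ht0def]; linarith
  have ht0η : t0 < η := by
    have : min δ η ≤ η := min_le_right _ _
    simp only [ht0def]; linarith
  have h1 : f 0 < f t0 :=
    hmono (Set.left_mem_Icc.2 hδpos.le) ⟨ht0pos.le, ht0δ⟩ ht0pos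
  have h2 : f t0 ≤ f 0 := by
    apply hηmax
    rw [Real.dist_eq, sub_zero, abs_of_pos ht0pos]
    exact ht0η
  linarith



variable {N : ℕ}

/-- The squared norm as a sum of squares of coordinates. -/
noncomputable def qfun (x : EuclideanSpace ℝ (Fin N)) : ℝ := ∑ i, x i * x i

/-- The derivative of `qfun`. -/
noncomputable def Lq (x : EuclideanSpace ℝ (Fin N)) :
    EuclideanSpace ℝ (Fin N) →L[ℝ] ℝ :=
  ∑ i, (2 * x i) • EuclideanSpace.proj i

lemma hasFDerivAt_qfun (x : EuclideanSpace ℝ (Fin N)) :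
    HasFDerivAt qfun (Lq x) x := by
  have h : ∀ i ∈ Finset.univ, HasFDerivAt (fun y : EuclideanSpace ℝ (Fin N) => y i * y i)
      ((2 * x i) • (EuclideanSpace.proj i : EuclideanSpace ℝ (Fin N) →L[ℝ] ℝ)) x := by
    intro i _
    have h1 := ((EuclideanSpace.proj (𝕜 := ℝ) i).hasFDerivAt (x := x)).mul
      ((EuclideanSpace.proj (𝕜 := ℝ) i).hasFDerivAt (x := x))
    refine h1.congr_fderiv ?_
    ext v
    simp [two_mul, add_mul]
  unfold qfun Lq
  exact HasFDerivAt.fun_sum h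

lemma Lq_apply (x : EuclideanSpace ℝ (Fin N)) (i : Fin N) :
    Lq x (EuclideanSpace.single i 1) = 2 * x i := by
  simp [Lq, ContinuousLinearMap.sum_apply, EuclideanSpace.single_apply,
    Finset.sum_ite_eq' Finset.univ i]

lemma qfun_eq (y : EuclideanSpace ℝ (Fin N)) : qfun y = ‖y‖ ^ 2 := by
  rw [EuclideanSpace.norm_eq, Real.sq_sqrt (by positivity)]
  simp [qfun, Real.norm_eq_abs, sq_abs, sq]

lemma qfun_pos {y : EuclideanSpace ℝ (Fin N)} (hy : y ≠ 0) : 0 < qfun y := by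
  rw [qfun_eq]
  exact pow_pos (norm_pos_iff.2 hy) 2

lemma qfun_rpow (y : EuclideanSpace ℝ (Fin N)) (t : ℝ) :
    qfun y ^ t = ‖y‖ ^ (2 * t) := by
  rw [qfun_eq, ← Real.rpow_natCast ‖y‖ 2, ← Real.rpow_mul (norm_nonneg y)]
  norm_num

/-- First derivative of the barrier function `z ↦ C0 * (qfun z) ^ p`. -/
noncomputable def W1 (C0 p : ℝ) (y : EuclideanSpace ℝ (Fin N)) :
    EuclideanSpace ℝ (Fin N) →L[ℝ] ℝ :=
  (C0 * (p * qfun y ^ (p - 1))) • Lq y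

/-- Second derivative data of the barrier function. -/
noncomputable def W2 (C0 p : ℝ) (x : EuclideanSpace ℝ (Fin N)) (i : Fin N) :
    EuclideanSpace ℝ (Fin N) →L[ℝ] ℝ :=
  (C0 * p) • ((qfun x ^ (p - 1)) • ((2:ℝ) • (EuclideanSpace.proj i :
      EuclideanSpace ℝ (Fin N) →L[ℝ] ℝ))
    + (2 * x i) • (((p - 1) * qfun x ^ (p - 1 - 1)) • Lq x))

lemma hasFDerivAt_barrier (C0 p : ℝ) {y : EuclideanSpace ℝ (Fin N)} (hy : y ≠ 0) :
    HasFDerivAt (fun z => C0 * qfun z ^ p) (W1 C0 p y) y := by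
  have h := ((hasFDerivAt_qfun y).rpow_const (p := p) (Or.inl (qfun_pos hy).ne')).const_mul C0
  rw [W1, ← smul_smul]
  exact h

lemma W1_apply (C0 p : ℝ) (y : EuclideanSpace ℝ (Fin N)) (i : Fin N) :
    W1 C0 p y (EuclideanSpace.single i 1) = C0 * (p * qfun y ^ (p - 1)) * (2 * y i) := by
  simp [W1, Lq_apply, mul_assoc]

lemma hasFDerivAt_W1_apply (C0 p : ℝ) {x : EuclideanSpace ℝ (Fin N)} (hx : x ≠ 0) (i : Fin N) :
    HasFDerivAt (fun y => W1 C0 p y (EuclideanSpace.single i 1)) (W2 C0 p x i) x := by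
  have h1 : HasFDerivAt (fun y : EuclideanSpace ℝ (Fin N) => qfun y ^ (p - 1))
      (((p - 1) * qfun x ^ (p - 1 - 1)) • Lq x) x :=
    (hasFDerivAt_qfun x).rpow_const (Or.inl (qfun_pos hx).ne')
  have h2 : HasFDerivAt (fun y : EuclideanSpace ℝ (Fin N) => 2 * y i)
      ((2:ℝ) • (EuclideanSpace.proj i : EuclideanSpace ℝ (Fin N) →L[ℝ] ℝ)) x :=
    ((EuclideanSpace.proj (𝕜 := ℝ) i).hasFDerivAt (x := x)).const_mul 2
  have h3 := (h1.mul h2).const_mul (C0 * p)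
  have heq : (fun y => W1 C0 p y (EuclideanSpace.single i 1))
      = fun y : EuclideanSpace ℝ (Fin N) => (C0 * p) * (qfun y ^ (p - 1) * (2 * y i)) := by
    funext y
    rw [W1_apply]
    ring
  rw [heq, W2]
  exact h3

lemma W2_sum (C0 p : ℝ) {x : EuclideanSpace ℝ (Fin N)} (hx : x ≠ 0) :
    ∑ i, W2 C0 p x i (EuclideanSpace.single i 1)
      = C0 * (2 * p) * ((N : ℝ) + 2 * p - 2) * qfun x ^ (p - 1) := by
  have hq1 : qfun x ^ (p - 1 - 1) * qfun x = qfun x ^ (p - 1) := by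
    nth_rewrite 2 [← Real.rpow_one (qfun x)]
    rw [← Real.rpow_add (qfun_pos hx)]
    norm_num
  have hterm : ∀ i : Fin N, W2 C0 p x i (EuclideanSpace.single i 1)
      = (C0 * p) * (2 * qfun x ^ (p - 1))
        + (C0 * p) * ((p - 1) * qfun x ^ (p - 1 - 1)) * (4 * (x i * x i)) := by
    intro i
    simp [W2, Lq_apply, EuclideanSpace.single_apply]
    ring
  rw [Finset.sum_congr rfl (fun i _ => hterm i), Finset.sum_add_distrib,
    Finset.sum_const, ← Finset.mul_sum]
  have hcard : (Finset.univ : Finset (Fin N)).card = N := by simp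
  rw [hcard]
  have hqq : ∑ i, x i * x i = qfun x := rfl
  have hsum4 : ∑ i : Fin N, 4 * (x i * x i) = 4 * qfun x := by
    rw [← Finset.mul_sum, hqq]
  rw [hsum4]
  have : (N : ℝ) • ((C0 * p) * (2 * qfun x ^ (p - 1)))
      = (N : ℝ) * ((C0 * p) * (2 * qfun x ^ (p - 1))) := by
    simp [nsmul_eq_mul]
  rw [nsmul_eq_mul]
  linear_combination (4 * C0 * p * (p - 1)) * hq1

/-- At a local maximum of `u - w`, we have `Δu ≤ Δw`. -/
lemma lap_le_of_isLocalMax {N : ℕ} {u w : EuclideanSpace ℝ (Fin N) → ℝ}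
    {x₀ : EuclideanSpace ℝ (Fin N)}
    {w' : EuclideanSpace ℝ (Fin N) → EuclideanSpace ℝ (Fin N) →L[ℝ] ℝ}
    {w'' : Fin N → EuclideanSpace ℝ (Fin N) →L[ℝ] ℝ} {ε : ℝ}
    (hu : ContDiff ℝ 2 u) (hε : 0 < ε)
    (hw' : ∀ y ∈ Metric.ball x₀ ε, HasFDerivAt w (w' y) y)
    (hw'' : ∀ i, HasFDerivAt (fun y => w' y (EuclideanSpace.single i 1)) (w'' i) x₀)
    (hmax : IsLocalMax (fun y => u y - w y) x₀) :
    lap u x₀ ≤ ∑ i, w'' i (EuclideanSpace.single i 1) := by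
  have hud : Differentiable ℝ u := hu.differentiable (by norm_num)
  have hfd : Differentiable ℝ (fderiv ℝ u) :=
    (hu.fderiv_right (m := 1) (by norm_num)).differentiable (by norm_num)
  have key : ∀ i : Fin N,
      fderiv ℝ (fun y => fderiv ℝ u y (EuclideanSpace.single i 1)) x₀
          (EuclideanSpace.single i 1)
        ≤ w'' i (EuclideanSpace.single i 1) := by
    intro i
    set e : EuclideanSpace ℝ (Fin N) := EuclideanSpace.single i (1:ℝ) with he
    have hne : ‖e‖ = 1 := by simp [he, EuclideanSpace.norm_single]
    have hA : HasFDerivAt (fun y => fderiv ℝ u y e)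
        ((ContinuousLinearMap.apply ℝ ℝ e).comp (fderiv ℝ (fderiv ℝ u) x₀)) x₀ :=
      (ContinuousLinearMap.apply ℝ ℝ e).hasFDerivAt.comp x₀ (hfd x₀).hasFDerivAt
    set A := (ContinuousLinearMap.apply ℝ ℝ e).comp (fderiv ℝ (fderiv ℝ u) x₀) with hAdef
    set line : ℝ → EuclideanSpace ℝ (Fin N) := fun t => x₀ + t • e with hline
    have hlined : ∀ t : ℝ, HasDerivAt line e t := by
      intro t
      simpa [hline] using ((hasDerivAt_id t).smul_const e).const_add x₀
    have hline0 : line 0 = x₀ := by simp [hline]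
    have hlinedist : ∀ t : ℝ, dist (line t) x₀ = |t| := by
      intro t
      simp [hline, dist_eq_norm, norm_smul, hne, Real.norm_eq_abs]
    set f : ℝ → ℝ := fun t => u (line t) - w (line t) with hf
    set f' : ℝ → ℝ := fun t => fderiv ℝ u (line t) e - w' (line t) e with hf'
    have hd : ∀ t ∈ Set.Ioo (-ε) ε, HasDerivAt f (f' t) t := by
      intro t ht
      have hmem : line t ∈ Metric.ball x₀ ε := by
        rw [Metric.mem_ball, hlinedist]
        exact abs_lt.2 ⟨ht.1, ht.2⟩
      exact ((hud (line t)).hasFDerivAt.comp_hasDerivAt t (hlined t)).sub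
        ((hw' _ hmem).comp_hasDerivAt t (hlined t))
    have hd2 : HasDerivAt f' (A e - w'' i e) 0 := by
      rw [← hline0] at hA
      have hB := hw'' i
      rw [← hline0] at hB
      exact (hA.comp_hasDerivAt 0 (hlined 0)).sub (hB.comp_hasDerivAt 0 (hlined 0))
    have hmaxf : IsLocalMax f 0 := by
      have hcont : Tendsto line (𝓝 0) (𝓝 x₀) := by
        rw [← hline0]
        exact (hlined 0).continuousAt
      have hev := hcont.eventually hmax
      have hf0 : f 0 = u x₀ - w x₀ := by rw [hf]; simp [hline0]
      unfold IsLocalMax IsMaxFilter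
      rw [hf0]
      exact hev
    have hle := second_deriv_nonpos_of_isLocalMax hε hd hd2 hmaxf
    rw [hA.fderiv]
    linarith
  exact Finset.sum_le_sum (fun i _ => key i)
set_option maxHeartbeats 2000000

/-- **Asymptotic behavior.** Under the hypotheses of the existence theorem on `ℝ^N`, if
moreover `lim_{|x|→∞} |x|^μ φ(|x|)` exists and is finite for some `μ ∈ (2, N)`, then the
positive solution `u` (constructed as the pointwise limit of the solutions `u_k` of the
problems on the balls `B_k`, extended by `0` outside `B_k`, which vanishes at infinity)
satisfies `u(x) = O(|x|^{2-μ})` as `|x| → ∞`. -/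
theorem singular_elliptic_asymptotic_decay
    {N : ℕ} (hN : 2 < N) (α : NNReal) (hα0 : 0 < α) (hα1 : α < 1)
    (a c : EuclideanSpace ℝ (Fin N) → ℝ)
    (ha : LocHolder α a) (hc : LocHolder α c)
    (hapos : ∀ x, 0 < a x) (hcpos : ∀ x, 0 < c x)
    (φ : ℝ → ℝ)
    (hφ : ∀ r : ℝ, 0 ≤ r →
      IsGreatest (a '' Metric.sphere (0 : EuclideanSpace ℝ (Fin N)) r) (φ r))
    (hint : IntegrableOn (fun r : ℝ => r * φ r) (Set.Ioi 0))
    (μ : ℝ) (hμ2 : 2 < μ) (hμN : μ < N)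
    (L : ℝ) (hL : Tendsto (fun r : ℝ => r ^ μ * φ r) atTop (nhds L))
    -- `u_k` solves the problem on the ball `B_k`, vanishes on `∂B_k`, and is extended by `0`
    -- outside `B_k`.
    (uk : ℕ → EuclideanSpace ℝ (Fin N) → ℝ)
    (huk : ∀ k : ℕ, 0 < k →
      ContinuousOn (uk k) (closure (Metric.ball (0 : EuclideanSpace ℝ (Fin N)) k)) ∧
      ContDiffOn ℝ 2 (uk k) (Metric.ball (0 : EuclideanSpace ℝ (Fin N)) k) ∧
      (∀ x ∈ Metric.ball (0 : EuclideanSpace ℝ (Fin N)) (k : ℝ), 0 < uk k x) ∧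
      (∀ x ∉ Metric.ball (0 : EuclideanSpace ℝ (Fin N)) (k : ℝ), uk k x = 0) ∧
      (∀ x ∈ Metric.ball (0 : EuclideanSpace ℝ (Fin N)) (k : ℝ),
        -lap (uk k) x + c x * (uk k x)⁻¹ * ‖gradient (uk k) x‖ ^ 2 = a x))
    -- `u` is the solution constructed as the limit of the `u_k`: it is their pointwise limit,
    -- it is positive, solves the equation on `ℝ^N` and vanishes at infinity.
    (u : EuclideanSpace ℝ (Fin N) → ℝ)
    (hconv : ∀ x, Tendsto (fun k => uk k x) atTop (nhds (u x)))
    (hreg : ContDiff ℝ 2 u)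
    (hupos : ∀ x, 0 < u x)
    (huvanish : Tendsto u (cocompact (EuclideanSpace ℝ (Fin N))) (nhds 0))
    (hueq : ∀ x, -lap u x + c x * (u x)⁻¹ * ‖gradient u x‖ ^ 2 = a x) :
    ∃ C > (0 : ℝ), ∃ R > (0 : ℝ), ∀ x : EuclideanSpace ℝ (Fin N),
      R ≤ ‖x‖ → u x ≤ C * ‖x‖ ^ (2 - μ) := by

  set p : ℝ := (2 - μ) / 2 with hp
  have h2p : 2 * p = 2 - μ := by rw [hp]; ring
  have hppos : p < 0 := by rw [hp]; linarith
  -- the bound `φ r ≤ M r^(-μ)` for large `r`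
  set M : ℝ := |L| + 1 with hM
  have hMpos : 0 < M := by positivity
  have hLM : L < M := by
    have := le_abs_self L
    rw [hM]; linarith
  have hev : ∀ᶠ r : ℝ in atTop, r ^ μ * φ r < M :=
    Filter.Tendsto.eventually_lt_const hLM hL
  rw [eventually_atTop] at hev
  obtain ⟨R₀, hR₀⟩ := hev
  set R : ℝ := max R₀ 1 with hR
  have hR1 : (1:ℝ) ≤ R := le_max_right _ _
  have hRpos : (0:ℝ) < R := lt_of_lt_of_le one_pos hR1
  have hφle : ∀ r : ℝ, R ≤ r → φ r ≤ M * r ^ (-μ) := by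
    intro r hr
    have hr1 : (1:ℝ) ≤ r := le_trans hR1 hr
    have hrpos : (0:ℝ) < r := lt_of_lt_of_le one_pos hr1
    have h1 : r ^ μ * φ r ≤ M := (hR₀ r (le_trans (le_max_left _ _) hr)).le
    have h2 : (0:ℝ) < r ^ μ := Real.rpow_pos_of_pos hrpos μ
    have h3 : φ r ≤ M / r ^ μ := by
      rw [le_div_iff₀ h2]
      calc φ r * r ^ μ = r ^ μ * φ r := by ring
        _ ≤ M := h1
    calc φ r ≤ M / r ^ μ := h3
      _ = M * r ^ (-μ) := by rw [Real.rpow_neg hrpos.le]; ring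
  -- bound for `u` on the sphere of radius `R`
  obtain ⟨B, hB⟩ := (isCompact_sphere (0 : EuclideanSpace ℝ (Fin N)) R).exists_bound_of_continuousOn
    (hreg.continuous.continuousOn)
  set K0 : ℝ := (μ - 2) * ((N : ℝ) - μ) with hK0def
  have hK0 : 0 < K0 := by
    rw [hK0def]
    apply mul_pos <;> linarith
  set C0 : ℝ := max ((M + 1) / K0) ((B + 1) * R ^ (μ - 2)) with hC0
  have hC0pos : 0 < C0 := by
    have : (0:ℝ) < (M + 1) / K0 := by positivity
    exact lt_of_lt_of_le this (le_max_left _ _)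
  refine ⟨C0, hC0pos, R, hRpos, ?_⟩
  by_contra hcon
  push_neg at hcon
  obtain ⟨x₁, hx₁R, hx₁⟩ := hcon
  set w : EuclideanSpace ℝ (Fin N) → ℝ := fun y => C0 * qfun y ^ p with hw
  set v : EuclideanSpace ℝ (Fin N) → ℝ := fun y => u y - w y with hv
  have hwnorm : ∀ y : EuclideanSpace ℝ (Fin N), w y = C0 * ‖y‖ ^ (2 - μ) := by
    intro y
    rw [hw]
    simp only
    rw [qfun_rpow, h2p]
  -- `v ≤ -1` on the sphere of radius `R`
  have hbdry : ∀ y : EuclideanSpace ℝ (Fin N), ‖y‖ = R → v y ≤ -1 := by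
    intro y hy
    have hyS : y ∈ Metric.sphere (0 : EuclideanSpace ℝ (Fin N)) R := by
      rwa [mem_sphere_zero_iff_norm]
    have hu_le : u y ≤ B := le_trans (le_abs_self _) (hB y hyS)
    have hwge : B + 1 ≤ w y := by
      rw [hwnorm y, hy]
      have h1 : (B + 1) * R ^ (μ - 2) ≤ C0 := le_max_right _ _
      have h2 : (0:ℝ) < R ^ (2 - μ) := Real.rpow_pos_of_pos hRpos _
      have h3 : (B + 1) * R ^ (μ - 2) * R ^ (2 - μ) ≤ C0 * R ^ (2 - μ) :=
        mul_le_mul_of_nonneg_right h1 h2.le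
      have h4 : R ^ (μ - 2) * R ^ (2 - μ) = 1 := by
        rw [← Real.rpow_add hRpos]; norm_num
      calc B + 1 = (B + 1) * (R ^ (μ - 2) * R ^ (2 - μ)) := by rw [h4]; ring
        _ = (B + 1) * R ^ (μ - 2) * R ^ (2 - μ) := by ring
        _ ≤ C0 * R ^ (2 - μ) := h3
    have : v y = u y - w y := rfl
    linarith
  have hx₁0 : x₁ ≠ 0 := by
    intro h
    rw [h, norm_zero] at hx₁R
    linarith
  have hvx₁ : 0 < v x₁ := by
    have hw1 : w x₁ = C0 * ‖x₁‖ ^ (2 - μ) := hwnorm x₁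
    have : v x₁ = u x₁ - w x₁ := rfl
    rw [this, hw1]
    linarith
  -- `v` tends to `0` at infinity
  have hwto : Tendsto w (cocompact (EuclideanSpace ℝ (Fin N))) (𝓝 0) := by
    have hn : Tendsto (fun y : EuclideanSpace ℝ (Fin N) => ‖y‖)
        (cocompact (EuclideanSpace ℝ (Fin N))) atTop := tendsto_norm_cocompact_atTop
    have hq : Tendsto (fun y : EuclideanSpace ℝ (Fin N) => qfun y)
        (cocompact (EuclideanSpace ℝ (Fin N))) atTop := by
      refine (hn.atTop_mul_atTop₀ hn).congr (fun y => ?_)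
      rw [qfun_eq]; ring
    have hr : Tendsto (fun s : ℝ => s ^ p) atTop (𝓝 0) := by
      have h := tendsto_rpow_neg_atTop (y := -p) (by linarith)
      simpa using h
    have h := (hr.comp hq).const_mul C0
    simpa [hw, Function.comp] using h
  have hvto : Tendsto v (cocompact (EuclideanSpace ℝ (Fin N))) (𝓝 0) := by
    have := huvanish.sub hwto
    simpa using this
  have hvsm : ∀ᶠ y in cocompact (EuclideanSpace ℝ (Fin N)), v y < v x₁ :=
    Filter.Tendsto.eventually_lt_const hvx₁ hvto
  obtain ⟨K₀, hK₀c, hK₀⟩ := mem_cocompact.1 hvsm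
  obtain ⟨r₀, hr₀⟩ := (Metric.isBounded_iff_subset_closedBall 0).1 hK₀c.isBounded
  set R₂ : ℝ := max r₀ R + 1 with hR₂
  have hRR₂ : R < R₂ := lt_of_le_of_lt (le_max_right _ _) (lt_add_one _)
  have hr₀R₂ : r₀ < R₂ := lt_of_le_of_lt (le_max_left _ _) (lt_add_one _)
  have hmemK₀ : ∀ y : EuclideanSpace ℝ (Fin N), v x₁ ≤ v y → ‖y‖ ≤ r₀ := by
    intro y hy
    by_cases hmem : y ∈ K₀
    · have := hr₀ hmem
      rwa [Metric.mem_closedBall, dist_zero_right] at this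
    · exfalso
      have h := hK₀ hmem
      simp only [Set.mem_setOf_eq] at h
      linarith
  set K' : Set (EuclideanSpace ℝ (Fin N)) :=
    Metric.closedBall 0 R₂ ∩ {y | R ≤ ‖y‖} with hK'
  have hK'c : IsCompact K' :=
    (isCompact_closedBall 0 R₂).inter_right (isClosed_le continuous_const continuous_norm)
  have hx₁K' : x₁ ∈ K' := by
    constructor
    · rw [Metric.mem_closedBall, dist_zero_right]
      exact le_trans (hmemK₀ x₁ le_rfl) hr₀R₂.le
    · exact hx₁R
  have hvcont : ContinuousOn v K' := by
    intro y hy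
    have hy0 : y ≠ 0 := by
      intro h
      have h2 := hy.2
      rw [h, Set.mem_setOf_eq, norm_zero] at h2
      linarith
    exact ((hreg.continuous.continuousAt).sub
      ((hasFDerivAt_barrier C0 p hy0).differentiableAt.continuousAt)).continuousWithinAt
  obtain ⟨x₀, hx₀K, hx₀max⟩ := hK'c.exists_isMaxOn ⟨x₁, hx₁K'⟩ hvcont
  have hvx₀ : v x₁ ≤ v x₀ := hx₀max hx₁K'
  have hx₀R : R < ‖x₀‖ := by
    have hx2 : R ≤ ‖x₀‖ := hx₀K.2
    rcases lt_or_eq_of_le hx2 with h | h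
    · exact h
    · exfalso
      have := hbdry x₀ h.symm
      linarith
  have hx₀R₂ : ‖x₀‖ < R₂ := lt_of_le_of_lt (hmemK₀ x₀ hvx₀) hr₀R₂
  have hx₀0 : x₀ ≠ 0 := by
    intro h
    rw [h, norm_zero] at hx₀R
    linarith
  set ε' : ℝ := ‖x₀‖ - R with hε'
  have hε'pos : 0 < ε' := by rw [hε']; linarith
  have hlocmax : IsLocalMax v x₀ := by
    have hmin : (0:ℝ) < min ε' (R₂ - ‖x₀‖) := lt_min hε'pos (by linarith)
    have hball : Metric.ball x₀ (min ε' (R₂ - ‖x₀‖)) ∈ 𝓝 x₀ := Metric.ball_mem_nhds _ hmin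
    refine Filter.eventually_of_mem hball ?_
    intro y hy
    rw [Metric.mem_ball] at hy
    have habs : |‖y‖ - ‖x₀‖| ≤ dist y x₀ := by
      rw [dist_eq_norm]
      exact abs_norm_sub_norm_le y x₀
    have h1 : ‖y‖ - ‖x₀‖ ≤ dist y x₀ := le_trans (le_abs_self _) habs
    have h2 : ‖x₀‖ - ‖y‖ ≤ dist y x₀ := by
      have hna := neg_le_abs (‖y‖ - ‖x₀‖)
      linarith
    have hd1 : dist y x₀ < ε' := lt_of_lt_of_le hy (min_le_left _ _)
    have hd2 : dist y x₀ < R₂ - ‖x₀‖ := lt_of_lt_of_le hy (min_le_right _ _)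
    apply hx₀max
    constructor
    · rw [Metric.mem_closedBall, dist_zero_right]
      linarith
    · rw [Set.mem_setOf_eq]
      rw [hε'] at hd1
      linarith
  -- apply the comparison of Laplacians at the interior maximum
  have hballne : ∀ y ∈ Metric.ball x₀ ε', y ≠ 0 := by
    intro y hy h0
    rw [Metric.mem_ball, h0, dist_zero_left, hε'] at hy
    linarith [norm_nonneg x₀]
  have hlap := lap_le_of_isLocalMax (w := w) (w' := fun y => W1 C0 p y)
    (w'' := fun i => W2 C0 p x₀ i) hreg hε'pos
    (fun y hy => hasFDerivAt_barrier C0 p (hballne y hy))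
    (fun i => hasFDerivAt_W1_apply C0 p hx₀0 i) hlocmax
  rw [W2_sum C0 p hx₀0] at hlap
  -- lower bound on `lap u x₀`
  have hgradnn : 0 ≤ c x₀ * (u x₀)⁻¹ * ‖gradient u x₀‖ ^ 2 := by
    apply mul_nonneg
    apply mul_nonneg (hcpos x₀).le
    · exact inv_nonneg.2 (hupos x₀).le
    · positivity
  have heq := hueq x₀
  have hlapu : -a x₀ ≤ lap u x₀ := by linarith
  have haφ : a x₀ ≤ φ ‖x₀‖ := by
    apply (hφ ‖x₀‖ (norm_nonneg x₀)).2
    exact ⟨x₀, mem_sphere_zero_iff_norm.2 rfl, rfl⟩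
  have hφM := hφle ‖x₀‖ hx₀R.le
  have hqp : qfun x₀ ^ (p - 1) = ‖x₀‖ ^ (-μ) := by
    rw [qfun_rpow]
    congr 1
    rw [hp]; ring
  have hT : 0 < ‖x₀‖ ^ (-μ) := Real.rpow_pos_of_pos (norm_pos_iff.2 hx₀0) _
  have hC0K : M + 1 ≤ C0 * K0 := by
    have h1 : (M + 1) / K0 ≤ C0 := le_max_left _ _
    calc M + 1 = ((M + 1) / K0) * K0 := by field_simp
      _ ≤ C0 * K0 := mul_le_mul_of_nonneg_right h1 hK0.le
  have hfactor : C0 * (2 * p) * ((N : ℝ) + 2 * p - 2) = -(C0 * K0) := by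
    rw [h2p, hK0def]; ring
  rw [hqp, hfactor] at hlap
  have hprod : (M + 1) * ‖x₀‖ ^ (-μ) ≤ C0 * K0 * ‖x₀‖ ^ (-μ) :=
    mul_le_mul_of_nonneg_right hC0K hT.le
  nlinarith [hT, hprod, hlap, hlapu, haφ, hφM]
end

section
/- Let Ω ⊂ ℝ^N be a bounded domain, let a, c : Ω̄ → ℝ be continuous with a > 0 and c > 0 on Ω̄, and set m₂ := min_{x∈Ω̄} a(x) and M₁ := max_{x∈Ω̄} c(x). Let λ₁ > 0 and let φ₁ ∈ C²(Ω̄) satisfy φ₁ > 0 in Ω, φ₁ = 0 on ∂Ω, and −Δφ₁ = λ₁·φ₁ in Ω. Let ε ∈ (0,1) and let σ₁ satisfy 0 < σ₁ ≤ min{ m₂ / (2·λ₁·max_{x∈Ω̄} φ₁(x)² + 4·M₁·max_{x∈Ω̄} |∇φ₁(x)|²), 1 }. Then the function u̲ := σ₁·φ₁² + ε satisfies u̲ ≥ ε > 0 on Ω̄, u̲ = ε on ∂Ω, and −Δu̲(x) + c(x)·u̲(x)^{−1}·|∇u̲(x)|² ≤ a(x) for every x ∈ Ω (i.e. u̲ is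 a sub solution of the truncated problem −Δu + c(x)u^{−1}|∇u|² = a(x) in Ω, u = ε on ∂Ω). -/
open Set Filter

open InnerProductSpace in
lemma fderiv_u_aux {E : Type*} [NormedAddCommGroup E] [InnerProductSpace ℝ E]
    (σ ε : ℝ) (φ : E → ℝ) (y : E) (hφ : DifferentiableAt ℝ φ y) :
    fderiv ℝ (fun z => σ * φ z ^ 2 + ε) y = (2 * σ * φ y) • fderiv ℝ φ y := by
  simp_rw [sq]
  rw [fderiv_add_const, fderiv_const_mul (show DifferentiableAt ℝ (fun z => φ z * φ z) y from hφ.mul hφ), fderiv_fun_mul hφ hφ]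
  module

lemma snd_deriv_u_aux {E : Type*} [NormedAddCommGroup E] [InnerProductSpace ℝ E]
    (σ ε : ℝ) (φ : E → ℝ) (x : E) (hd2 : ContDiffAt ℝ 2 φ x) (v : E) :
    fderiv ℝ (fun y => fderiv ℝ (fun z => σ * φ z ^ 2 + ε) y v) x v
      = 2 * σ * (fderiv ℝ φ x v) ^ 2
        + 2 * σ * φ x * fderiv ℝ (fun y => fderiv ℝ φ y v) x v := by
  have hφx : DifferentiableAt ℝ φ x := hd2.differentiableAt two_ne_zero
  have hfd : DifferentiableAt ℝ (fderiv ℝ φ) x :=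
    (hd2.fderiv_right (show (1:WithTop ℕ∞)+1 ≤ 2 by norm_num)).differentiableAt one_ne_zero
  have hψd : DifferentiableAt ℝ (fun y => fderiv ℝ φ y v) x :=
    ((ContinuousLinearMap.apply ℝ ℝ v).differentiableAt).comp x hfd
  have hev : (fun y => fderiv ℝ (fun z => σ * φ z ^ 2 + ε) y v)
      =ᶠ[nhds x] fun y => (2 * σ) * (φ y * fderiv ℝ φ y v) := by
    filter_upwards [hd2.eventually (by norm_num)] with y hy
    rw [fderiv_u_aux σ ε φ y (hy.differentiableAt two_ne_zero)]
    simp [smul_eq_mul]; ring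
  rw [hev.fderiv_eq, fderiv_const_mul (show DifferentiableAt ℝ (fun y => φ y * fderiv ℝ φ y v) x from hφx.mul hψd), fderiv_fun_mul hφx hψd]
  simp [smul_eq_mul]; ring

/-- **Sub solution of the truncated problem.** With `m₂ = min_{Ω̄} a`, `M₁ = max_{Ω̄} c`,
`φ₁ > 0` the first eigenfunction (`-Δφ₁ = λ₁ φ₁` in `Ω`, `φ₁ = 0` on `∂Ω`), `ε ∈ (0,1)` and
`0 < σ₁ ≤ min { m₂ / (2 λ₁ max φ₁² + 4 M₁ max |∇φ₁|²), 1 }`, the function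
`u̲ = σ₁ φ₁² + ε` satisfies `u̲ ≥ ε > 0` on `Ω̄`, `u̲ = ε` on `∂Ω`, and
`-Δu̲ + c(x) u̲⁻¹ |∇u̲|² ≤ a(x)` in `Ω`. -/
theorem subsolution_truncated_problem
    {N : ℕ} (Ω : Set (EuclideanSpace ℝ (Fin N)))
    (hΩo : IsOpen Ω) (hΩconn : IsConnected Ω) (hΩb : Bornology.IsBounded Ω)
    (a c : EuclideanSpace ℝ (Fin N) → ℝ)
    (hacont : ContinuousOn a (closure Ω)) (hccont : ContinuousOn c (closure Ω))
    (hapos : ∀ x ∈ closure Ω, 0 < a x) (hcpos : ∀ x ∈ closure Ω, 0 < c x)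
    (m₂ M₁ : ℝ)
    (hm₂ : IsLeast (a '' closure Ω) m₂)
    (hM₁ : IsGreatest (c '' closure Ω) M₁)
    (lam : ℝ) (hlam : 0 < lam)
    (φ₁ : EuclideanSpace ℝ (Fin N) → ℝ)
    (hφreg : ContDiffOn ℝ 2 φ₁ (closure Ω))
    (hφpos : ∀ x ∈ Ω, 0 < φ₁ x)
    (hφbdry : ∀ x ∈ frontier Ω, φ₁ x = 0)
    (hφeig : ∀ x ∈ Ω, -lap φ₁ x = lam * φ₁ x)
    (Mφ Mg : ℝ)
    (hMφ : IsGreatest ((fun x => φ₁ x ^ 2) '' closure Ω) Mφ)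
    (hMg : IsGreatest ((fun x => ‖gradient φ₁ x‖ ^ 2) '' closure Ω) Mg)
    (ε : ℝ) (hε : ε ∈ Set.Ioo (0 : ℝ) 1)
    (σ₁ : ℝ) (hσpos : 0 < σ₁)
    (hσle : σ₁ ≤ min (m₂ / (2 * lam * Mφ + 4 * M₁ * Mg)) 1) :
    (∀ x ∈ closure Ω, ε ≤ σ₁ * φ₁ x ^ 2 + ε) ∧ 0 < ε ∧
    (∀ x ∈ frontier Ω, σ₁ * φ₁ x ^ 2 + ε = ε) ∧
    (∀ x ∈ Ω,
      -lap (fun y => σ₁ * φ₁ y ^ 2 + ε) x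
        + c x * (σ₁ * φ₁ x ^ 2 + ε)⁻¹ *
          ‖gradient (fun y => σ₁ * φ₁ y ^ 2 + ε) x‖ ^ 2 ≤ a x) := by
  open InnerProductSpace in
  obtain ⟨hε0, hε1⟩ := hε
  refine ⟨?_, hε0, ?_, ?_⟩
  · intro x _; nlinarith [sq_nonneg (φ₁ x)]
  · intro x hx; rw [hφbdry x hx]; ring
  · intro x hx
    have hxcl' : x ∈ closure Ω := subset_closure hx
    have hxcl : closure Ω ∈ nhds x := mem_of_superset (hΩo.mem_nhds hx) subset_closure
    have hd2 : ContDiffAt ℝ 2 φ₁ x := hφreg.contDiffAt hxcl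
    have hφx : DifferentiableAt ℝ φ₁ x := hd2.differentiableAt two_ne_zero
    -- gradient of u
    have hgrad : gradient (fun y => σ₁ * φ₁ y ^ 2 + ε) x
        = (2 * σ₁ * φ₁ x) • gradient φ₁ x := by
      simp only [gradient]
      rw [fderiv_u_aux σ₁ ε φ₁ x hφx, map_smul]
    -- sum of squared partials equals squared gradient norm
    have h1 : ∀ i : Fin N, fderiv ℝ φ₁ x (EuclideanSpace.single i 1)
        = gradient φ₁ x i := by
      intro i
      have h2 : fderiv ℝ φ₁ x (EuclideanSpace.single i 1)
          = inner ℝ (gradient φ₁ x) (EuclideanSpace.single i 1) := by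
        rw [gradient, toDual_symm_apply]
      rw [h2, EuclideanSpace.inner_single_right]; simp
    have hsum : ∑ i : Fin N, (fderiv ℝ φ₁ x (EuclideanSpace.single i 1)) ^ 2
        = ‖gradient φ₁ x‖ ^ 2 := by
      simp_rw [h1]
      rw [← real_inner_self_eq_norm_sq, PiLp.inner_apply]
      simp [sq]
    -- Laplacian of u
    have hlapu : lap (fun y => σ₁ * φ₁ y ^ 2 + ε) x
        = 2 * σ₁ * ‖gradient φ₁ x‖ ^ 2 + 2 * σ₁ * φ₁ x * lap φ₁ x := by
      simp only [lap]
      rw [Finset.sum_congr rfl (fun i _ => snd_deriv_u_aux σ₁ ε φ₁ x hd2 _),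
        Finset.sum_add_distrib, ← Finset.mul_sum, ← Finset.mul_sum, hsum]
    have hlapφ : lap φ₁ x = -(lam * φ₁ x) := by
      have := hφeig x hx; linarith
    -- numeric facts
    set G := ‖gradient φ₁ x‖ ^ 2 with hGdef
    have hG0 : 0 ≤ G := sq_nonneg _
    have hφΩ : 0 < φ₁ x := hφpos x hx
    have hMφx : φ₁ x ^ 2 ≤ Mφ := hMφ.2 ⟨x, hxcl', rfl⟩
    have hMgx : G ≤ Mg := hMg.2 ⟨x, hxcl', rfl⟩
    have hcx : 0 < c x := hcpos x hxcl'
    have hcM : c x ≤ M₁ := hM₁.2 ⟨x, hxcl', rfl⟩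
    have hax : m₂ ≤ a x := hm₂.2 ⟨x, hxcl', rfl⟩
    have hMφpos : 0 < Mφ := lt_of_lt_of_le (pow_pos hφΩ 2) hMφx
    have hM₁pos : 0 < M₁ := lt_of_lt_of_le hcx hcM
    have hMg0 : 0 ≤ Mg := le_trans hG0 hMgx
    have hD : 0 < 2 * lam * Mφ + 4 * M₁ * Mg := by positivity
    have hσD : σ₁ * (2 * lam * Mφ + 4 * M₁ * Mg) ≤ m₂ := by
      have h := (le_min_iff.mp hσle).1
      rw [le_div_iff₀ hD] at h; exact h
    have hv : 0 < σ₁ * φ₁ x ^ 2 + ε := by positivity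
    have hnorm : ‖gradient (fun y => σ₁ * φ₁ y ^ 2 + ε) x‖ ^ 2
        = (2 * σ₁ * φ₁ x) ^ 2 * G := by
      rw [hgrad, norm_smul, mul_pow, Real.norm_eq_abs, sq_abs]
    rw [hlapu, hlapφ, hnorm]
    have key : c x * (σ₁ * φ₁ x ^ 2 + ε)⁻¹ * ((2 * σ₁ * φ₁ x) ^ 2 * G)
        ≤ 4 * σ₁ * M₁ * Mg := by
      have h3 : c x * (σ₁ * φ₁ x ^ 2 + ε)⁻¹ * ((2 * σ₁ * φ₁ x) ^ 2 * G)
          = (c x * ((2 * σ₁ * φ₁ x) ^ 2 * G)) / (σ₁ * φ₁ x ^ 2 + ε) := by ring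
      rw [h3, div_le_iff₀ hv]
      have h4 : 4 * σ₁ * (c x * G) ≤ 4 * σ₁ * (M₁ * Mg) := by
        have := mul_le_mul hcM hMgx hG0 hM₁pos.le
        nlinarith
      nlinarith [mul_nonneg (mul_nonneg (mul_nonneg hσpos.le hcx.le) hG0) hε0.le,
        mul_nonneg (mul_nonneg hM₁pos.le hMg0) (sq_nonneg (φ₁ x))]
    linarith [key, hσD, hax,
      mul_le_mul_of_nonneg_left hMφx (show (0:ℝ) ≤ 2 * σ₁ * lam by positivity),
      mul_nonneg hσpos.le hG0]
end

section
/- Let Ω ⊂ ℝ^N be a bounded domain, let a, c : Ω̄ → ℝ be continuous with a > 0 and c > 0 on Ω̄, and let ε > 0. Suppose u, v ∈ C²(Ω̄)∩C(Ω̄) both satisfy: u > 0 in Ω, u = 0 on ∂Ω, and −Δu(x) + c(x)·(u(x)+ε)^{−1}·|∇u(x)|² = a(x) for all x ∈ Ω, and likewise for v. Then u = v on Ω̄. -/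
open Set Filter

lemma secondDerivTest1D (g : ℝ → ℝ) (K : ℝ)
    (hg : ∀ᶠ t in nhds (0:ℝ), DifferentiableAt ℝ g t)
    (hmax : IsLocalMax g 0) (hK : HasDerivAt (deriv g) K 0) : K ≤ 0 := by
  by_contra hK'
  push_neg at hK'
  have hd0 : deriv g 0 = 0 := hmax.deriv_eq_zero
  have hslope := hasDerivAt_iff_tendsto_slope.mp hK
  have hpos : ∀ᶠ t in nhdsWithin (0:ℝ) {(0:ℝ)}ᶜ, 0 < slope (deriv g) 0 t :=
    hslope.eventually (eventually_gt_nhds hK')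
  -- get δ
  have hpos' : ∀ᶠ t in nhds (0:ℝ), t ∈ ({(0:ℝ)}ᶜ : Set ℝ) → 0 < slope (deriv g) 0 t :=
    eventually_nhdsWithin_iff.mp hpos
  obtain ⟨δ₁, hδ₁, h1⟩ := Metric.eventually_nhds_iff.mp hpos'
  obtain ⟨δ₂, hδ₂, h2⟩ := Metric.eventually_nhds_iff.mp hg
  obtain ⟨δ₃, hδ₃, h3⟩ := Metric.eventually_nhds_iff.mp hmax
  set δ := min δ₁ (min δ₂ δ₃) with hδdef
  have hδ : 0 < δ := lt_min hδ₁ (lt_min hδ₂ hδ₃)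
  have hmem : ∀ t : ℝ, |t| ≤ δ/2 → t ∈ Metric.ball (0:ℝ) δ := by
    intro t ht
    simp only [Metric.mem_ball, Real.dist_eq, sub_zero]
    linarith [abs_nonneg t]
  have hsm : StrictMonoOn g (Icc 0 (δ/2)) := by
    apply strictMonoOn_of_deriv_pos (convex_Icc _ _)
    · intro t ht
      refine (h2 ?_).continuousAt.continuousWithinAt
      simp only [Real.dist_eq, sub_zero]
      rw [abs_of_nonneg ht.1]
      calc t ≤ δ/2 := ht.2
        _ < δ := by linarith
        _ ≤ min δ₂ δ₃ := min_le_right _ _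
        _ ≤ δ₂ := min_le_left _ _
    · intro t ht
      rw [interior_Icc, mem_Ioo] at ht
      have htne : t ≠ 0 := ne_of_gt ht.1
      have hslopet : 0 < slope (deriv g) 0 t := by
        refine h1 ?_ htne
        simp only [Real.dist_eq, sub_zero]
        rw [abs_of_nonneg (le_of_lt ht.1)]
        calc t < δ/2 := ht.2
          _ < δ := by linarith
          _ ≤ δ₁ := min_le_left _ _
      rw [slope_def_field, hd0, sub_zero, sub_zero] at hslopet
      have := mul_pos hslopet ht.1
      rwa [div_mul_cancel₀ _ htne] at this
  have h4 : g (δ/2) > g 0 :=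
    hsm ⟨le_refl _, by positivity⟩ ⟨by positivity, le_refl _⟩ (by positivity)
  have h5 : g (δ/2) ≤ g 0 := by
    apply h3
    simp only [Real.dist_eq, sub_zero]
    rw [abs_of_nonneg (by positivity)]
    calc δ/2 < δ := by linarith
      _ ≤ δ₃ := le_trans (min_le_right _ _) (min_le_right _ _)
  linarith

lemma secondDerivTest {E : Type*} [NormedAddCommGroup E] [NormedSpace ℝ E]
    (f : E → ℝ) (x h : E) (hf : ContDiffAt ℝ 2 f x) (hmax : IsLocalMax f x) :
    fderiv ℝ (fun y => fderiv ℝ f y h) x h ≤ 0 := by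
  set L : ℝ → E := fun t => x + t • h with hL
  have hLd : ∀ t : ℝ, HasDerivAt L h t := by
    intro t
    convert (hasDerivAt_id t |>.smul_const h).const_add x using 1 <;> simp [hL]
  have hLc : Continuous L := by fun_prop
  have hL0 : L 0 = x := by simp [hL]
  set g : ℝ → ℝ := fun t => f (L t) with hgdef
  -- eventual smoothness of f near x pulled back
  have hev : ∀ᶠ y in nhds x, ContDiffAt ℝ 2 f y := hf.eventually (by norm_num)
  have hevt : ∀ᶠ t in nhds (0:ℝ), ContDiffAt ℝ 2 f (L t) := by
    have : Tendsto L (nhds 0) (nhds x) := by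
      rw [← hL0]; exact hLc.continuousAt
    exact this.eventually hev
  have hderivg : ∀ᶠ t in nhds (0:ℝ), HasDerivAt g (fderiv ℝ f (L t) h) t := by
    filter_upwards [hevt] with t ht
    exact (ht.differentiableAt (by norm_num)).hasFDerivAt.comp_hasDerivAt t (hLd t)
  have hgdiff : ∀ᶠ t in nhds (0:ℝ), DifferentiableAt ℝ g t := by
    filter_upwards [hderivg] with t ht using ht.differentiableAt
  have hderivg' : ∀ᶠ t in nhds (0:ℝ), deriv g t = fderiv ℝ f (L t) h := by
    filter_upwards [hderivg] with t ht using ht.deriv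
  -- the map y ↦ fderiv f y h is differentiable at x
  have hφ : DifferentiableAt ℝ (fun y => fderiv ℝ f y h) x := by
    have h1 : ContDiffAt ℝ 1 (fderiv ℝ f) x := hf.fderiv_right (by norm_num)
    exact (h1.differentiableAt (by norm_num)).clm_apply (differentiableAt_const h)
  -- deriv g has derivative fderiv (fun y => fderiv f y h) x h at 0
  have hK : HasDerivAt (deriv g) (fderiv ℝ (fun y => fderiv ℝ f y h) x h) 0 := by
    have h2 : HasDerivAt (fun t => fderiv ℝ f (L t) h)
        (fderiv ℝ (fun y => fderiv ℝ f y h) x h) 0 := by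
      have h3 : HasFDerivAt (fun y => fderiv ℝ f y h)
          (fderiv ℝ (fun y => fderiv ℝ f y h) x) (L 0) := by
        rw [hL0]; exact hφ.hasFDerivAt
      exact h3.comp_hasDerivAt 0 (hLd 0)
    exact h2.congr_of_eventuallyEq (by filter_upwards [hderivg'] with t ht using ht)
  -- g has a local max at 0
  have hgmax : IsLocalMax g 0 := by
    have : Tendsto L (nhds 0) (nhds x) := by rw [← hL0]; exact hLc.continuousAt
    have := this.eventually hmax
    filter_upwards [this] with t ht
    simpa [hgdef, hL0] using ht
  exact secondDerivTest1D g _ hgdiff hgmax hK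

lemma fderivApplyDiff {E : Type*} [NormedAddCommGroup E] [NormedSpace ℝ E]
    {f : E → ℝ} {x : E} (hf : ContDiffAt ℝ 2 f x) (e : E) :
    DifferentiableAt ℝ (fun y => fderiv ℝ f y e) x := by
  have h1 : ContDiffAt ℝ 1 (fderiv ℝ f) x := hf.fderiv_right (by norm_num)
  exact (h1.differentiableAt (by norm_num)).clm_apply (differentiableAt_const e)

lemma log_fderiv_eventually {E : Type*} [NormedAddCommGroup E] [NormedSpace ℝ E]
    (f : E → ℝ) (ε : ℝ) (x : E) (hf : ContDiffAt ℝ 2 f x) (hpos : 0 < f x + ε) :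
    ∀ᶠ y in nhds x, HasFDerivAt (fun z => Real.log (f z + ε))
      ((f y + ε)⁻¹ • fderiv ℝ f y) y := by
  have hev2 : ∀ᶠ y in nhds x, ContDiffAt ℝ 2 f y := hf.eventually (by norm_num)
  have hcont : ContinuousAt (fun y => f y + ε) x :=
    (hf.continuousAt.add continuousAt_const)
  have hevp : ∀ᶠ y in nhds x, 0 < f y + ε := ContinuousAt.eventually_lt continuousAt_const hcont hpos
  filter_upwards [hev2, hevp] with y h2 hp
  have hfd : HasFDerivAt f (fderiv ℝ f y) y :=
    (h2.differentiableAt (by norm_num)).hasFDerivAt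
  have hfd' : HasFDerivAt (fun z => f z + ε) (fderiv ℝ f y) y := hfd.add_const ε
  exact (Real.hasDerivAt_log (ne_of_gt hp)).comp_hasFDerivAt y hfd'

lemma log_second_deriv {E : Type*} [NormedAddCommGroup E] [NormedSpace ℝ E]
    (f : E → ℝ) (ε : ℝ) (x : E) (hf : ContDiffAt ℝ 2 f x) (hpos : 0 < f x + ε) (e : E) :
    fderiv ℝ (fun y => fderiv ℝ (fun z => Real.log (f z + ε)) y e) x e
      = (f x + ε)⁻¹ * fderiv ℝ (fun y => fderiv ℝ f y e) x e
        - ((f x + ε)⁻¹) ^ 2 * (fderiv ℝ f x e) ^ 2 := by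
  have hev := log_fderiv_eventually f ε x hf hpos
  have heq : (fun y => fderiv ℝ (fun z => Real.log (f z + ε)) y e)
      =ᶠ[nhds x] fun y => (f y + ε)⁻¹ * fderiv ℝ f y e := by
    filter_upwards [hev] with y hy
    rw [hy.fderiv]
    simp
  rw [heq.fderiv_eq]
  -- product rule
  have hB : HasFDerivAt (fun y => fderiv ℝ f y e)
      (fderiv ℝ (fun y => fderiv ℝ f y e) x) x := (fderivApplyDiff hf e).hasFDerivAt
  have hfd' : HasFDerivAt (fun z => f z + ε) (fderiv ℝ f x) x :=
    (hf.differentiableAt (by norm_num)).hasFDerivAt.add_const ε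
  have hA : HasFDerivAt (fun y => (f y + ε)⁻¹)
      ((-((f x + ε) ^ 2)⁻¹) • fderiv ℝ f x) x :=
    (hasDerivAt_inv (ne_of_gt hpos)).comp_hasFDerivAt x hfd'
  have hAB := (hA.mul hB).fderiv
  erw [hAB]
  simp only [ContinuousLinearMap.add_apply, ContinuousLinearMap.smul_apply, smul_eq_mul]
  rw [inv_pow]
  ring


lemma fderiv_apply_sub_second {E : Type*} [NormedAddCommGroup E] [NormedSpace ℝ E]
    (p q : E → ℝ) (x e : E) (hp : ContDiffAt ℝ 2 p x) (hq : ContDiffAt ℝ 2 q x) :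
    fderiv ℝ (fun y => fderiv ℝ (fun z => p z - q z) y e) x e
      = fderiv ℝ (fun y => fderiv ℝ p y e) x e - fderiv ℝ (fun y => fderiv ℝ q y e) x e := by
  have hev : ∀ᶠ y in nhds x, fderiv ℝ (fun z => p z - q z) y = fderiv ℝ p y - fderiv ℝ q y := by
    filter_upwards [hp.eventually (by norm_num), hq.eventually (by norm_num)] with y h1 h2
    exact fderiv_sub (h1.differentiableAt (by norm_num)) (h2.differentiableAt (by norm_num))
  have heq : (fun y => fderiv ℝ (fun z => p z - q z) y e)
      =ᶠ[nhds x] fun y => fderiv ℝ p y e - fderiv ℝ q y e := by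
    filter_upwards [hev] with y hy
    rw [hy]; simp
  rw [heq.fderiv_eq]; erw [fderiv_sub (fderivApplyDiff hp e) (fderivApplyDiff hq e)]
  simp

lemma sum_sq_fderiv {N : ℕ} (f : EuclideanSpace ℝ (Fin N) → ℝ) (x : EuclideanSpace ℝ (Fin N))
    (hf : DifferentiableAt ℝ f x) :
    ∑ i : Fin N, (fderiv ℝ f x (EuclideanSpace.single i 1)) ^ 2 = ‖gradient f x‖ ^ 2 := by
  have hg := hf.hasGradientAt
  have hfd : fderiv ℝ f x = InnerProductSpace.toDual ℝ _ (gradient f x) :=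
    hg.hasFDerivAt.fderiv
  rw [hfd, EuclideanSpace.norm_eq]
  rw [Real.sq_sqrt (by positivity)]
  congr 1
  funext i
  rw [InnerProductSpace.toDual_apply_apply]
  have : (inner ℝ (gradient f x) (EuclideanSpace.single i (1:ℝ)) : ℝ) = gradient f x i := by
    rw [EuclideanSpace.inner_single_right]
    simp
  rw [this]
  simp [Real.norm_eq_abs, sq_abs]

lemma le_aux
    {N : ℕ} (Ω : Set (EuclideanSpace ℝ (Fin N)))
    (hΩo : IsOpen Ω) (hne : Ω.Nonempty) (hΩb : Bornology.IsBounded Ω)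
    (a c : EuclideanSpace ℝ (Fin N) → ℝ)
    (hapos : ∀ x ∈ closure Ω, 0 < a x)
    (ε : ℝ) (hε : 0 < ε)
    (u v : EuclideanSpace ℝ (Fin N) → ℝ)
    (hureg : ContDiffOn ℝ 2 u (closure Ω)) (hucont : ContinuousOn u (closure Ω))
    (hvreg : ContDiffOn ℝ 2 v (closure Ω)) (hvcont : ContinuousOn v (closure Ω))
    (hupos : ∀ x ∈ Ω, 0 < u x) (hvpos : ∀ x ∈ Ω, 0 < v x)
    (hubdry : ∀ x ∈ frontier Ω, u x = 0) (hvbdry : ∀ x ∈ frontier Ω, v x = 0)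
    (hueq : ∀ x ∈ Ω, -lap u x + c x * (u x + ε)⁻¹ * ‖gradient u x‖ ^ 2 = a x)
    (hveq : ∀ x ∈ Ω, -lap v x + c x * (v x + ε)⁻¹ * ‖gradient v x‖ ^ 2 = a x) :
    ∀ x ∈ closure Ω, u x ≤ v x := by
  have hcl : ∀ x ∈ closure Ω, x ∈ Ω ∨ x ∈ frontier Ω := by
    intro x hx
    by_cases h : x ∈ Ω
    · exact Or.inl h
    · right
      rw [frontier, hΩo.interior_eq]
      exact ⟨hx, h⟩
  have hu0 : ∀ x ∈ closure Ω, 0 < u x + ε := by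
    intro x hx
    rcases hcl x hx with h | h
    · have := hupos x h; linarith
    · rw [hubdry x h]; linarith
  have hv0 : ∀ x ∈ closure Ω, 0 < v x + ε := by
    intro x hx
    rcases hcl x hx with h | h
    · have := hvpos x h; linarith
    · rw [hvbdry x h]; linarith
  set w : EuclideanSpace ℝ (Fin N) → ℝ :=
    fun y => Real.log (u y + ε) - Real.log (v y + ε) with hwdef
  have hwcont : ContinuousOn w (closure Ω) :=
    ((hucont.add continuousOn_const).log fun x hx => ne_of_gt (hu0 x hx)).sub
      ((hvcont.add continuousOn_const).log fun x hx => ne_of_gt (hv0 x hx))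
  have hK : IsCompact (closure Ω) := hΩb.isCompact_closure
  obtain ⟨x1, hx1cl, hmax⟩ := hK.exists_isMaxOn hne.closure hwcont
  by_cases hcase : w x1 ≤ 0
  · intro x hx
    have hwx : w x ≤ 0 := le_trans (hmax hx) hcase
    have hwx' : Real.log (u x + ε) - Real.log (v x + ε) ≤ 0 := hwx
    have : u x + ε ≤ v x + ε := by
      rw [← Real.log_le_log_iff (hu0 x hx) (hv0 x hx)]
      linarith
    linarith
  · exfalso
    push_neg at hcase
    have hx1f : x1 ∉ frontier Ω := by
      intro hf
      have hw1 : w x1 = Real.log (u x1 + ε) - Real.log (v x1 + ε) := rfl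
      rw [hw1, hubdry x1 hf, hvbdry x1 hf] at hcase
      simp at hcase
    have hx1 : x1 ∈ Ω := (hcl x1 hx1cl).resolve_right hx1f
    have hnb : closure Ω ∈ nhds x1 := mem_of_superset (hΩo.mem_nhds hx1) subset_closure
    have hu2 : ContDiffAt ℝ 2 u x1 := hureg.contDiffAt hnb
    have hv2 : ContDiffAt ℝ 2 v x1 := hvreg.contDiffAt hnb
    have hup : 0 < u x1 + ε := hu0 _ hx1cl
    have hvp : 0 < v x1 + ε := hv0 _ hx1cl
    have hc' : 0 < Real.log (u x1 + ε) - Real.log (v x1 + ε) := hcase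
    have huv : v x1 + ε < u x1 + ε := by
      rw [← Real.log_lt_log_iff hvp hup]
      linarith
    set p : EuclideanSpace ℝ (Fin N) → ℝ := fun y => Real.log (u y + ε) with hpdef
    set q : EuclideanSpace ℝ (Fin N) → ℝ := fun y => Real.log (v y + ε) with hqdef
    have hp2 : ContDiffAt ℝ 2 p x1 :=
      by
        have h1 : ContDiffAt ℝ 2 Real.log (u x1 + ε) := Real.contDiffAt_log.mpr (ne_of_gt hup)
        have h2 : ContDiffAt ℝ 2 (fun y => u y + ε) x1 := hu2.add contDiffAt_const
        exact h1.comp x1 h2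
    have hq2 : ContDiffAt ℝ 2 q x1 :=
      by
        have h1 : ContDiffAt ℝ 2 Real.log (v x1 + ε) := Real.contDiffAt_log.mpr (ne_of_gt hvp)
        have h2 : ContDiffAt ℝ 2 (fun y => v y + ε) x1 := hv2.add contDiffAt_const
        exact h1.comp x1 h2
    have hw2 : ContDiffAt ℝ 2 w x1 := hp2.sub hq2
    have hlocmax : IsLocalMax w x1 := hmax.isLocalMax hnb
    -- notation
    set α : ℝ := (u x1 + ε)⁻¹ with hαdef
    set β : ℝ := (v x1 + ε)⁻¹ with hβdef
    have hαpos : 0 < α := by positivity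
    have hβpos : 0 < β := by positivity
    have hαβ : α < β := by
      rw [hαdef, hβdef]
      exact inv_strictAnti₀ hvp huv
    -- first order condition
    have h1 : fderiv ℝ w x1 = 0 := hlocmax.fderiv_eq_zero
    have hpu := (log_fderiv_eventually u ε x1 hu2 hup).self_of_nhds
    have hpv := (log_fderiv_eventually v ε x1 hv2 hvp).self_of_nhds
    have hfw : HasFDerivAt w (α • fderiv ℝ u x1 - β • fderiv ℝ v x1) x1 := hpu.sub hpv
    have hfirst : ∀ e, α * fderiv ℝ u x1 e = β * fderiv ℝ v x1 e := by
      intro e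
      have h0 : (α • fderiv ℝ u x1 - β • fderiv ℝ v x1) e = (0 : ℝ) := by
        rw [← hfw.fderiv, h1]; rfl
      simp only [ContinuousLinearMap.sub_apply, ContinuousLinearMap.smul_apply,
        smul_eq_mul, sub_eq_zero] at h0
      exact h0
    -- second order
    set e : Fin N → EuclideanSpace ℝ (Fin N) := fun i => EuclideanSpace.single i 1 with hedef
    set Du : Fin N → ℝ := fun i => fderiv ℝ u x1 (e i) with hDudef
    set Dv : Fin N → ℝ := fun i => fderiv ℝ v x1 (e i) with hDvdef
    set Du2 : Fin N → ℝ := fun i => fderiv ℝ (fun y => fderiv ℝ u y (e i)) x1 (e i) with hDu2def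
    set Dv2 : Fin N → ℝ := fun i => fderiv ℝ (fun y => fderiv ℝ v y (e i)) x1 (e i) with hDv2def
    have hdecomp : ∀ i : Fin N, fderiv ℝ (fun y => fderiv ℝ w y (e i)) x1 (e i)
        = (α * Du2 i - α ^ 2 * Du i ^ 2) - (β * Dv2 i - β ^ 2 * Dv i ^ 2) := by
      intro i
      have := fderiv_apply_sub_second p q x1 (e i) hp2 hq2
      rw [hwdef]
      rw [this, log_second_deriv u ε x1 hu2 hup (e i), log_second_deriv v ε x1 hv2 hvp (e i)]
    have hsum : ∑ i : Fin N, ((α * Du2 i - α ^ 2 * Du i ^ 2)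
        - (β * Dv2 i - β ^ 2 * Dv i ^ 2)) ≤ 0 := by
      apply Finset.sum_nonpos
      intro i _
      rw [← hdecomp i]
      exact secondDerivTest w x1 (e i) hw2 hlocmax
    set Su : ℝ := ∑ i : Fin N, Du i ^ 2 with hSudef
    set Sv : ℝ := ∑ i : Fin N, Dv i ^ 2 with hSvdef
    have hsum' : α * lap u x1 - α ^ 2 * Su - (β * lap v x1 - β ^ 2 * Sv) ≤ 0 := by
      have hexp : ∑ i : Fin N, ((α * Du2 i - α ^ 2 * Du i ^ 2)
          - (β * Dv2 i - β ^ 2 * Dv i ^ 2))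
          = α * lap u x1 - α ^ 2 * Su - (β * lap v x1 - β ^ 2 * Sv) := by
        simp only [lap, hSudef, hSvdef, Finset.mul_sum, ← Finset.sum_sub_distrib]; rfl
      linarith [hexp ▸ hsum]
    -- gradient identities
    have hgradu : Su = ‖gradient u x1‖ ^ 2 :=
      sum_sq_fderiv u x1 (hu2.differentiableAt (by norm_num))
    have hgradv : Sv = ‖gradient v x1‖ ^ 2 :=
      sum_sq_fderiv v x1 (hv2.differentiableAt (by norm_num))
    -- equal gradient-square term
    have hP : α ^ 2 * Su = β ^ 2 * Sv := by
      rw [hSudef, hSvdef, Finset.mul_sum, Finset.mul_sum]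
      congr 1
      funext i
      have := hfirst (e i)
      calc α ^ 2 * Du i ^ 2 = (α * Du i) ^ 2 := by ring
        _ = (β * Dv i) ^ 2 := by rw [this]
        _ = β ^ 2 * Dv i ^ 2 := by ring
    -- PDE at x1
    have heu := hueq x1 hx1
    have hev := hveq x1 hx1
    rw [← hgradu] at heu
    rw [← hgradv] at hev
    have hlapu : lap u x1 = c x1 * α * Su - a x1 := by rw [hαdef] at *; linarith
    have hlapv : lap v x1 = c x1 * β * Sv - a x1 := by rw [hβdef] at *; linarith
    have e1 : α * lap u x1 = c x1 * (α ^ 2 * Su) - a x1 * α := by rw [hlapu]; ring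
    have e2 : β * lap v x1 = c x1 * (β ^ 2 * Sv) - a x1 * β := by rw [hlapv]; ring
    have e3 : c x1 * (α ^ 2 * Su) = c x1 * (β ^ 2 * Sv) := by rw [hP]
    have hfin : a x1 * β ≤ a x1 * α := by linarith
    have ha : 0 < a x1 := hapos x1 hx1cl
    nlinarith [mul_lt_mul_of_pos_left hαβ ha]


/-- **Uniqueness for the truncated problem.** On a bounded domain `Ω`, with `a, c` continuous
and positive on `Ω̄` and `ε > 0`, any two solutions `u, v ∈ C²(Ω̄) ∩ C(Ω̄)` of
`-Δu + c(x) (u + ε)⁻¹ |∇u|² = a(x)` in `Ω`, `u > 0` in `Ω`, `u = 0` on `∂Ω`, coincide. -/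
theorem uniqueness_truncated_problem
    {N : ℕ} (Ω : Set (EuclideanSpace ℝ (Fin N)))
    (hΩo : IsOpen Ω) (hΩconn : IsConnected Ω) (hΩb : Bornology.IsBounded Ω)
    (a c : EuclideanSpace ℝ (Fin N) → ℝ)
    (hacont : ContinuousOn a (closure Ω)) (hccont : ContinuousOn c (closure Ω))
    (hapos : ∀ x ∈ closure Ω, 0 < a x) (hcpos : ∀ x ∈ closure Ω, 0 < c x)
    (ε : ℝ) (hε : 0 < ε)
    (u v : EuclideanSpace ℝ (Fin N) → ℝ)
    (hureg : ContDiffOn ℝ 2 u (closure Ω)) (hucont : ContinuousOn u (closure Ω))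
    (hvreg : ContDiffOn ℝ 2 v (closure Ω)) (hvcont : ContinuousOn v (closure Ω))
    (hupos : ∀ x ∈ Ω, 0 < u x) (hvpos : ∀ x ∈ Ω, 0 < v x)
    (hubdry : ∀ x ∈ frontier Ω, u x = 0) (hvbdry : ∀ x ∈ frontier Ω, v x = 0)
    (hueq : ∀ x ∈ Ω, -lap u x + c x * (u x + ε)⁻¹ * ‖gradient u x‖ ^ 2 = a x)
    (hveq : ∀ x ∈ Ω, -lap v x + c x * (v x + ε)⁻¹ * ‖gradient v x‖ ^ 2 = a x) :
    ∀ x ∈ closure Ω, u x = v x := by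
  intro x hx
  exact le_antisymm
    (le_aux Ω hΩo hΩconn.nonempty hΩb a c hapos ε hε u v hureg hucont hvreg hvcont
      hupos hvpos hubdry hvbdry hueq hveq x hx)
    (le_aux Ω hΩo hΩconn.nonempty hΩb a c hapos ε hε v u hvreg hvcont hureg hucont
      hvpos hupos hvbdry hubdry hveq hueq x hx)
end

section
/- Let Ω ⊂ ℝ^N be a bounded domain, let a, c : Ω̄ → ℝ with a > 0 and c > 0 on Ω̄, and let u ∈ C(Ω̄) ∩ C²(Ω) satisfy u > 0 in Ω, u = 0 on ∂Ω, and −Δu(x) + c(x)·u(x)^{−1}·|∇u(x)|² = a(x) for all x ∈ Ω. Let W ∈ C²(Ω̄) satisfy W > 0 on Ω̄ and −ΔW(x) ≥ a(x) for all x ∈ Ω. Then u(x) ≤ W(x) for every x ∈ Ω̄. -/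
open Set Filter

lemma deriv2_nonpos_of_isLocalMax {g : ℝ → ℝ} (hmax : IsLocalMax g 0)
    (hdiff : ∀ᶠ t in nhds 0, DifferentiableAt ℝ g t)
    (hd2 : DifferentiableAt ℝ (deriv g) 0) :
    deriv (deriv g) 0 ≤ 0 := by
  by_contra hpos
  push_neg at hpos
  have hg'0 : deriv g 0 = 0 := hmax.deriv_eq_zero
  have hslope : Tendsto (slope (deriv g) 0) (nhdsWithin 0 {(0:ℝ)}ᶜ)
      (nhds (deriv (deriv g) 0)) :=
    hasDerivAt_iff_tendsto_slope.mp hd2.hasDerivAt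
  have hev : ∀ᶠ t in nhdsWithin 0 {(0:ℝ)}ᶜ, 0 < slope (deriv g) 0 t :=
    hslope.eventually (eventually_gt_nhds hpos)
  have hev' : ∀ᶠ t in nhdsWithin (0:ℝ) (Ioi 0), 0 < deriv g t := by
    have h1 : ∀ᶠ t in nhdsWithin (0:ℝ) (Ioi 0), 0 < slope (deriv g) 0 t :=
      nhdsWithin_mono 0 (fun t (ht : t ∈ Ioi 0) => ne_of_gt ht) hev
    have h2 : ∀ᶠ t in nhdsWithin (0:ℝ) (Ioi 0), 0 < t := self_mem_nhdsWithin
    filter_upwards [h1, h2] with t h1 h2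
    have := mul_pos h1 h2
    rw [slope_def_field, hg'0, sub_zero, sub_zero, div_mul_cancel₀ _ (ne_of_gt h2)] at this
    exact this
  obtain ⟨δ₁, hδ₁, hpos'⟩ := mem_nhdsGT_iff_exists_Ioo_subset.mp hev'
  obtain ⟨ε, hε, hball⟩ := Metric.eventually_nhds_iff.mp (hdiff.and hmax)
  have hδ₁pos : 0 < δ₁ := hδ₁
  set t₀ := min δ₁ ε / 2 with ht₀def
  have ht₀pos : 0 < t₀ := by positivity
  have ht₀δ : t₀ < δ₁ := by
    have := min_le_left δ₁ ε; simp only [ht₀def]; linarith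
  have ht₀ε : t₀ < ε := by
    have := min_le_right δ₁ ε; simp only [ht₀def]; linarith
  have hdiffIcc : ∀ t ∈ Icc (0:ℝ) t₀, DifferentiableAt ℝ g t := by
    intro t ht
    refine (hball ?_).1
    rw [Real.dist_eq, sub_zero, abs_of_nonneg ht.1]
    exact lt_of_le_of_lt ht.2 ht₀ε
  have hmono : StrictMonoOn g (Icc 0 t₀) := by
    apply strictMonoOn_of_deriv_pos (convex_Icc _ _)
    · exact fun t ht => (hdiffIcc t ht).continuousAt.continuousWithinAt
    · intro t ht
      rw [interior_Icc] at ht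
      exact hpos' ⟨ht.1, lt_trans ht.2 ht₀δ⟩
  have hlt : g 0 < g t₀ := hmono (left_mem_Icc.mpr ht₀pos.le)
    (right_mem_Icc.mpr ht₀pos.le) ht₀pos
  have hle : g t₀ ≤ g 0 := by
    refine (hball ?_).2
    rw [Real.dist_eq, sub_zero, abs_of_nonneg ht₀pos.le]
    exact ht₀ε
  linarith
open Set Filter

variable {E : Type*} [NormedAddCommGroup E] [NormedSpace ℝ E]

lemma second_deriv_nonpos_of_isLocalMax_s15 {f : E → ℝ} {x : E}
    (hf : ContDiffAt ℝ 2 f x) (hmax : IsLocalMax f x) (v : E) :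
    fderiv ℝ (fun y => fderiv ℝ f y v) x v ≤ 0 := by
  -- the line through x in direction v
  set L : ℝ → E := fun t => x + t • v with hL
  have hLcont : Continuous L := by continuity
  have hL0 : L 0 = x := by simp [hL]
  have hLtend : Tendsto L (nhds 0) (nhds x) := by
    simpa [hL0] using hLcont.tendsto 0
  have hLD : ∀ t : ℝ, HasDerivAt L v t := fun t => by
    simpa [hL] using ((hasDerivAt_id t).smul_const v).const_add x
  -- differentiability of f near x
  obtain ⟨U, hU, hfo⟩ := hf.contDiffOn (le_refl 2) (by simp)
  obtain ⟨V, hVU, hVo, hxV⟩ := mem_nhds_iff.mp hU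
  have hdV : ∀ y ∈ V, DifferentiableAt ℝ f y := fun y hy =>
    ((hfo.mono hVU).differentiableOn (by norm_num)).differentiableAt (hVo.mem_nhds hy)
  set g : ℝ → ℝ := fun t => f (L t) with hg
  have hmaxg : IsLocalMax g 0 := by
    have : ∀ᶠ t in nhds 0, f (L t) ≤ f x := hLtend.eventually hmax
    simpa [IsLocalMax, IsMaxFilter, hg, hL0] using this
  have hevV : ∀ᶠ t in nhds 0, L t ∈ V := hLtend.eventually (hVo.eventually_mem hxV)
  have hgder : ∀ᶠ t in nhds 0, HasDerivAt g (fderiv ℝ f (L t) v) t := by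
    filter_upwards [hevV] with t ht
    exact ((hdV (L t) ht).hasFDerivAt.comp_hasDerivAt t (hLD t))
  have hgdiff : ∀ᶠ t in nhds 0, DifferentiableAt ℝ g t := by
    filter_upwards [hgder] with t ht using ht.differentiableAt
  have hderiv_eq : deriv g =ᶠ[nhds 0] fun t => fderiv ℝ f (L t) v := by
    filter_upwards [hgder] with t ht using ht.deriv
  -- the map y ↦ fderiv f y v is differentiable at x
  have hfd : DifferentiableAt ℝ (fderiv ℝ f) x :=
    (hf.fderiv_right (m := 1) (by norm_num)).differentiableAt (by norm_num)
  have hh : DifferentiableAt ℝ (fun y => fderiv ℝ f y v) x :=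
    (ContinuousLinearMap.apply ℝ ℝ v).differentiableAt.comp x hfd
  have hcomp : HasDerivAt (fun t => fderiv ℝ f (L t) v)
      (fderiv ℝ (fun y => fderiv ℝ f y v) x v) 0 := by
    have hx0 : HasFDerivAt (fun y => fderiv ℝ f y v)
        (fderiv ℝ (fun y => fderiv ℝ f y v) x) (L 0) := hL0 ▸ hh.hasFDerivAt
    exact hx0.comp_hasDerivAt 0 (hLD 0)
  have hd2 : DifferentiableAt ℝ (deriv g) 0 :=
    (hderiv_eq.differentiableAt_iff).mpr hcomp.differentiableAt
  have hval : deriv (deriv g) 0 = fderiv ℝ (fun y => fderiv ℝ f y v) x v := by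
    rw [hderiv_eq.deriv_eq]
    exact hcomp.deriv
  have := deriv2_nonpos_of_isLocalMax hmaxg hgdiff hd2
  rwa [hval] at this

lemma lap_nonpos_of_isLocalMax {N : ℕ} {f : EuclideanSpace ℝ (Fin N) → ℝ}
    {x : EuclideanSpace ℝ (Fin N)} (hf : ContDiffAt ℝ 2 f x) (hmax : IsLocalMax f x) :
    lap f x ≤ 0 :=
  Finset.sum_nonpos fun i _ => second_deriv_nonpos_of_isLocalMax_s15 hf hmax _

lemma lap_sq_proj {N : ℕ} (i₀ : Fin N) (x : EuclideanSpace ℝ (Fin N)) :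
    lap (fun y => EuclideanSpace.proj i₀ y * EuclideanSpace.proj i₀ y) x = 2 := by
  set p := EuclideanSpace.proj (𝕜 := ℝ) i₀ with hp
  have hfd : ∀ y : EuclideanSpace ℝ (Fin N),
      fderiv ℝ (fun y => p y * p y) y = p y • p + p y • p := fun y =>
    (p.hasFDerivAt.mul p.hasFDerivAt).fderiv
  have hsecond : ∀ (e : EuclideanSpace ℝ (Fin N)) (y : EuclideanSpace ℝ (Fin N)),
      fderiv ℝ (fun z => fderiv ℝ (fun w => p w * p w) z e) y e = 2 * p e * p e := by
    intro e y
    have heq : (fun z => fderiv ℝ (fun w => p w * p w) z e) = fun z => ((2 * p e) • p) z := by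
      funext z
      rw [hfd z]
      simp [ContinuousLinearMap.add_apply, ContinuousLinearMap.smul_apply]
      ring
    rw [heq, ((2 * p e) • p).fderiv]
    simp [ContinuousLinearMap.smul_apply]
  unfold lap
  have hval : ∀ i : Fin N, p (EuclideanSpace.single i 1) = if i₀ = i then 1 else 0 := by
    intro i
    rw [hp]
    simpa using EuclideanSpace.single_apply i (1:ℝ) i₀
  calc ∑ i : Fin N, fderiv ℝ
        (fun y => fderiv ℝ (fun y => p y * p y) y (EuclideanSpace.single i 1)) x
        (EuclideanSpace.single i 1)
      = ∑ i : Fin N, 2 * p (EuclideanSpace.single i 1) * p (EuclideanSpace.single i 1) := by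
        exact Finset.sum_congr rfl fun i _ => hsecond _ x
    _ = ∑ i : Fin N, if i₀ = i then 2 else 0 := by
        refine Finset.sum_congr rfl fun i _ => ?_
        rw [hval i]
        split <;> norm_num
    _ = 2 := by simp

lemma differentiableAt_fderiv_apply {E : Type*} [NormedAddCommGroup E] [NormedSpace ℝ E]
    {f : E → ℝ} {x : E} (hf : ContDiffAt ℝ 2 f x) (v : E) :
    DifferentiableAt ℝ (fun y => fderiv ℝ f y v) x :=
  (ContinuousLinearMap.apply ℝ ℝ v).differentiableAt.comp x
    ((hf.fderiv_right (m := 1) (by norm_num)).differentiableAt (by norm_num))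

lemma lap_comb {N : ℕ} {Ω : Set (EuclideanSpace ℝ (Fin N))} (hΩo : IsOpen Ω)
    {u W q : EuclideanSpace ℝ (Fin N) → ℝ}
    (hu : ContDiffOn ℝ 2 u Ω) (hW : ContDiffOn ℝ 2 W Ω) (hq : ContDiff ℝ 2 q)
    (ε : ℝ) {x : EuclideanSpace ℝ (Fin N)} (hx : x ∈ Ω) :
    lap (fun y => u y - W y + ε * q y) x = lap u x - lap W x + ε * lap q x := by
  have huA : ∀ y ∈ Ω, ContDiffAt ℝ 2 u y := fun y hy => hu.contDiffAt (hΩo.mem_nhds hy)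
  have hWA : ∀ y ∈ Ω, ContDiffAt ℝ 2 W y := fun y hy => hW.contDiffAt (hΩo.mem_nhds hy)
  have hfd : ∀ y ∈ Ω, fderiv ℝ (fun z => u z - W z + ε * q z) y
      = fderiv ℝ u y - fderiv ℝ W y + ε • fderiv ℝ q y := by
    intro y hy
    have h1 := ((huA y hy).differentiableAt (by norm_num)).hasFDerivAt
    have h2 := ((hWA y hy).differentiableAt (by norm_num)).hasFDerivAt
    have h3 := (hq.differentiable (by norm_num) y).hasFDerivAt
    exact ((h1.sub h2).add (h3.const_mul ε)).fderiv
  have key : ∀ e : EuclideanSpace ℝ (Fin N),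
      fderiv ℝ (fun z => fderiv ℝ (fun w => u w - W w + ε * q w) z e) x e
      = fderiv ℝ (fun z => fderiv ℝ u z e) x e - fderiv ℝ (fun z => fderiv ℝ W z e) x e
        + ε * fderiv ℝ (fun z => fderiv ℝ q z e) x e := by
    intro e
    have heq : (fun z => fderiv ℝ (fun w => u w - W w + ε * q w) z e)
        =ᶠ[nhds x] fun z => fderiv ℝ u z e - fderiv ℝ W z e + ε * fderiv ℝ q z e := by
      filter_upwards [hΩo.mem_nhds hx] with z hz
      rw [hfd z hz]
      simp [ContinuousLinearMap.add_apply, ContinuousLinearMap.sub_apply,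
        ContinuousLinearMap.smul_apply]
    rw [heq.fderiv_eq]
    have d1 := differentiableAt_fderiv_apply (huA x hx) e
    have d2 := differentiableAt_fderiv_apply (hWA x hx) e
    have d3 := differentiableAt_fderiv_apply (hq.contDiffAt (x := x)) e
    rw [fderiv_fun_add ((d1.fun_sub d2)) (d3.const_mul ε), fderiv_fun_sub d1 d2, fderiv_const_mul d3 ε]
    simp [ContinuousLinearMap.add_apply, ContinuousLinearMap.sub_apply,
      ContinuousLinearMap.smul_apply]
  unfold lap
  rw [Finset.sum_congr rfl fun i _ => key _]
  rw [Finset.sum_add_distrib, Finset.sum_sub_distrib, Finset.mul_sum]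


set_option maxHeartbeats 1000000 in
/-- **Comparison with a positive supersolution.** On a bounded domain `Ω` with `a, c > 0`
on `Ω̄`, if `u ∈ C(Ω̄) ∩ C²(Ω)` satisfies `u > 0` in `Ω`, `u = 0` on `∂Ω` and
`-Δu + c(x) u⁻¹ |∇u|² = a(x)` in `Ω`, while `W ∈ C²(Ω̄)` satisfies `W > 0` on `Ω̄` and
`-ΔW ≥ a(x)` in `Ω`, then `u ≤ W` on `Ω̄`. -/
theorem comparison_with_supersolution
    {N : ℕ} (Ω : Set (EuclideanSpace ℝ (Fin N)))
    (hΩo : IsOpen Ω) (hΩconn : IsConnected Ω) (hΩb : Bornology.IsBounded Ω)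
    (a c : EuclideanSpace ℝ (Fin N) → ℝ)
    (hapos : ∀ x ∈ closure Ω, 0 < a x) (hcpos : ∀ x ∈ closure Ω, 0 < c x)
    (u : EuclideanSpace ℝ (Fin N) → ℝ)
    (hucont : ContinuousOn u (closure Ω))
    (hureg : ContDiffOn ℝ 2 u Ω)
    (hupos : ∀ x ∈ Ω, 0 < u x)
    (hubdry : ∀ x ∈ frontier Ω, u x = 0)
    (hueq : ∀ x ∈ Ω, -lap u x + c x * (u x)⁻¹ * ‖gradient u x‖ ^ 2 = a x)
    (W : EuclideanSpace ℝ (Fin N) → ℝ)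
    (hWreg : ContDiffOn ℝ 2 W (closure Ω))
    (hWpos : ∀ x ∈ closure Ω, 0 < W x)
    (hWsuper : ∀ x ∈ Ω, a x ≤ -lap W x) :
    ∀ x ∈ closure Ω, u x ≤ W x := by
  -- degenerate case N = 0
  rcases Nat.eq_zero_or_pos N with hN | hN
  · exfalso
    obtain ⟨z, hz⟩ := hΩconn.nonempty
    have h1 : lap u z = 0 := by
      unfold lap
      subst hN
      simp
    have h2 : gradient u z = 0 := by
      subst hN
      exact Subsingleton.elim _ _
    have := hueq z hz
    rw [h1, h2] at this
    simp at this
    have := hapos z (subset_closure hz)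
    linarith
  -- main case
  set i₀ : Fin N := ⟨0, hN⟩ with hi₀
  set p := EuclideanSpace.proj (𝕜 := ℝ) i₀ with hp
  set q : EuclideanSpace ℝ (Fin N) → ℝ := fun y => p y * p y with hq
  have hqsmooth : ContDiff ℝ 2 q := (p.contDiff).mul (p.contDiff)
  have hqnonneg : ∀ y, 0 ≤ q y := fun y => mul_self_nonneg _
  -- bound for q on the closure
  obtain ⟨R, hR⟩ := (hΩb.closure).subset_closedBall 0
  set M : ℝ := (‖p‖ * |R| + 1) ^ 2 with hM
  have hMpos : 0 < M := by positivity
  have hqM : ∀ y ∈ closure Ω, q y ≤ M := by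
    intro y hy
    have h1 : ‖y‖ ≤ R := by simpa using hR hy
    have h2 : |p y| ≤ ‖p‖ * |R| := by
      calc |p y| ≤ ‖p‖ * ‖y‖ := p.le_opNorm y
        _ ≤ ‖p‖ * |R| := by
            have := le_abs_self R
            have := norm_nonneg p
            nlinarith [norm_nonneg y]
    calc q y = |p y| ^ 2 := by rw [hq]; simp [sq_abs]; ring
      _ ≤ (‖p‖ * |R| + 1) ^ 2 := by nlinarith [abs_nonneg (p y)]
  -- compactness
  have hKcomp : IsCompact (closure Ω) := hΩb.isCompact_closure
  obtain ⟨z, hz⟩ := hΩconn.nonempty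
  have hWΩ : ContDiffOn ℝ 2 W Ω := hWreg.mono subset_closure
  -- the key estimate
  intro x hx
  have key : ∀ ε : ℝ, 0 < ε → u x - W x ≤ ε * M := by
    intro ε hε
    set F : EuclideanSpace ℝ (Fin N) → ℝ := fun y => u y - W y + ε * q y with hF
    have hFcont : ContinuousOn F (closure Ω) :=
      (hucont.sub hWreg.continuousOn).add
        ((continuous_const.mul hqsmooth.continuous).continuousOn)
    obtain ⟨x₀, hx₀, hmax⟩ := hKcomp.exists_isMaxOn ⟨z, subset_closure hz⟩ hFcont
    have hx₀notΩ : x₀ ∉ Ω := by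
      intro hx₀Ω
      -- interior maximum: the Laplacian of F is nonpositive there
      have hlocmax : IsLocalMax F x₀ :=
        hmax.isLocalMax (mem_of_superset (hΩo.mem_nhds hx₀Ω) subset_closure)
      have hFreg : ContDiffAt ℝ 2 F x₀ :=
        (((hureg.contDiffAt (hΩo.mem_nhds hx₀Ω)).sub
          (hWΩ.contDiffAt (hΩo.mem_nhds hx₀Ω))).add
          (contDiffAt_const.mul hqsmooth.contDiffAt))
      have hlapF : lap F x₀ ≤ 0 := lap_nonpos_of_isLocalMax hFreg hlocmax
      have hcomb : lap F x₀ = lap u x₀ - lap W x₀ + ε * lap q x₀ :=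
        lap_comb hΩo hureg hWΩ hqsmooth ε hx₀Ω
      have hlapq : lap q x₀ = 2 := lap_sq_proj i₀ x₀
      -- the PDE gives `lap u x₀ ≥ lap W x₀`
      have hterm : 0 ≤ c x₀ * (u x₀)⁻¹ * ‖gradient u x₀‖ ^ 2 := by
        have h1 := hcpos x₀ (subset_closure hx₀Ω)
        have h2 := hupos x₀ hx₀Ω
        positivity
      have h3 := hueq x₀ hx₀Ω
      have h4 := hWsuper x₀ hx₀Ω
      -- lap u x₀ = cterm - a x₀ ≥ -a x₀ ≥ lap W x₀
      have h5 : lap W x₀ ≤ lap u x₀ := by linarith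
      rw [hcomb, hlapq] at hlapF
      linarith
    have hx₀front : x₀ ∈ frontier Ω := by
      rw [hΩo.frontier_eq]; exact ⟨hx₀, hx₀notΩ⟩
    -- value of F at the maximum point
    have hFx₀ : F x₀ ≤ ε * M := by
      have h1 : u x₀ = 0 := hubdry x₀ hx₀front
      have h2 : 0 < W x₀ := hWpos x₀ hx₀
      have h3 : q x₀ ≤ M := hqM x₀ hx₀
      have h4 : ε * q x₀ ≤ ε * M := mul_le_mul_of_nonneg_left h3 hε.le
      show u x₀ - W x₀ + ε * q x₀ ≤ ε * M
      rw [h1]; linarith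
    have hFx : F x ≤ F x₀ := hmax hx
    have : u x - W x ≤ F x := by
      show u x - W x ≤ u x - W x + ε * q x
      have := mul_nonneg hε.le (hqnonneg x)
      linarith
    linarith
  -- let ε → 0
  by_contra hcon
  push_neg at hcon
  have hd : 0 < u x - W x := by linarith
  have := key ((u x - W x) / (2 * M)) (div_pos hd (by linarith))
  rw [div_mul_eq_mul_div, mul_comm] at this
  have h2 : M * (u x - W x) / (2 * M) = (u x - W x) / 2 := by
    rw [mul_comm 2 M]
    exact mul_div_mul_left _ _ hMpos.ne' 
  linarith
end
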